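/- Let S be an integral domain, σ ∈ Aut(S) of order n ≥ 2, f monic of degree m, b ∈ S^×, and G : S_f → S_b a non-monomial homomorphism with G|_S = τ for τ commuting with σ. Let k = deg(G(t)) and let s > 1 be the least integer with sk ≥ m. If (s+1)k ≤ 2m, then b ∈ S_0 and n | m, i.e., the Petit algebra S_b is associative. -/

import Mathlib

open Finset

noncomputable section

namespace PetitFormal

variable {S : Type*}

/-- Partial norm `N_i^τ(β) = ∏_{j=0}^{i-1} τ^j(β)`. -/
def pnorm [CommRing S] (τ : RingAut S) (i : ℕ) (β : S) : S :=
  ∏ j ∈ Finset.range i, (τ ^ j) β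

/-- Multiplication in the skew polynomial ring `S[t;σ]`, with `t·a = σ(a)·t`,
modelled on finitely supported functions `ℕ →₀ S`. -/
def skewMul [CommRing S] (σ : RingAut S) (x y : ℕ →₀ S) : ℕ →₀ S :=
  x.sum fun i c => y.sum fun j d => Finsupp.single (i + j) (c * (σ ^ i) d)

/-- Embedding of degree `< m` polynomials into `ℕ →₀ S`. -/
def toPoly [CommRing S] {m : ℕ} (x : Fin m → S) : ℕ →₀ S :=
  ∑ i : Fin m, Finsupp.single (i : ℕ) (x i)

/-- One pass of right division by the monic polynomial `f = t^m - f0(t)`: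
`reduceAux σ m f0 K` reduces a skew polynomial supported in `[0, m+K)`
to one supported in `[0, m)`, using `t^{m+j} ≡ ∑_i σ^j(f0 i) t^{j+i}` (mod_r f). -/
def reduceAux [CommRing S] (σ : RingAut S) (m : ℕ) (f0 : Fin m → S) :
    ℕ → (ℕ →₀ S) → (ℕ →₀ S)
  | 0, x => x
  | K + 1, x =>
      reduceAux σ m f0 K
        (x - Finsupp.single (m + K) (x (m + K))
          + ∑ j : Fin m, Finsupp.single (K + (j : ℕ)) (x (m + K) * (σ ^ K) (f0 j)))

/-- Multiplication in the (generally nonassociative) Petit algebra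
`S_f = S[t;σ]/S[t;σ](t^m - f0(t))`: multiply in `S[t;σ]` and reduce by right
division by `f = t^m - f0(t)`. -/
def petitMul [CommRing S] (σ : RingAut S) (m : ℕ) (f0 : Fin m → S)
    (x y : Fin m → S) : Fin m → S :=
  fun d => (reduceAux σ m f0 m (skewMul σ (toPoly x) (toPoly y))) (d : ℕ)

/-- The coefficient vector of the constant `a`, so that `t^m - f0 = t^m - a`. -/
def constF [CommRing S] (m : ℕ) (a : S) : Fin m → S :=
  fun i => if (i : ℕ) = 0 then a else 0

/-- Multiplication in the Petit algebra `S_a = S[t;σ]/S[t;σ](t^m - a)`. -/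
def petitMulC [CommRing S] (σ : RingAut S) (m : ℕ) (a : S) :
    (Fin m → S) → (Fin m → S) → (Fin m → S) :=
  petitMul σ m (constF m a)

/-- The monomial `c t^k` as an element of the Petit algebra (zero if `k ≥ m`). -/
def mono [CommRing S] (m : ℕ) (c : S) (k : ℕ) : Fin m → S :=
  fun i => if (i : ℕ) = k then c else 0

/-- The identity `1 = 1·t^0` of the Petit algebra. -/
def pone [CommRing S] (m : ℕ) : Fin m → S := mono m 1 0

/-- Left-nested power `L(z,s) = z(z(⋯(z)))` (`s` factors) in the Petit algebra. -/
def lpow [CommRing S] (σ : RingAut S) (m : ℕ) (f0 : Fin m → S) (z : Fin m → S) :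
    ℕ → Fin m → S
  | 0 => pone m
  | s + 1 => petitMul σ m f0 z (lpow σ m f0 z s)

/-- `G` is a (unital) ring homomorphism from the Petit algebra `S_f` to `S_g`. -/
def IsPetitHom [CommRing S] (σ : RingAut S) (m : ℕ) (f0 g0 : Fin m → S)
    (G : (Fin m → S) → (Fin m → S)) : Prop :=
  (∀ x y, G (x + y) = G x + G y) ∧
  (∀ x y, G (petitMul σ m f0 x y) = petitMul σ m g0 (G x) (G y)) ∧
  G (pone m) = pone m

/-- `G` is a (unital) ring endomorphism of the skew polynomial ring `S[t;σ]`. -/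
def IsSkewHom [CommRing S] (σ : RingAut S) (G : (ℕ →₀ S) → (ℕ →₀ S)) : Prop :=
  (∀ x y, G (x + y) = G x + G y) ∧
  (∀ x y, G (skewMul σ x y) = skewMul σ (G x) (G y)) ∧
  G (Finsupp.single 0 1) = Finsupp.single 0 1

/-- `G` is a (unital) ring homomorphism from `S[t;σ]` to the Petit algebra `S_g`. -/
def IsSkewToPetitHom [CommRing S] (σ : RingAut S) (m : ℕ) (g0 : Fin m → S)
    (G : (ℕ →₀ S) → (Fin m → S)) : Prop :=
  (∀ x y, G (x + y) = G x + G y) ∧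
  (∀ x y, G (skewMul σ x y) = petitMul σ m g0 (G x) (G y)) ∧
  G (Finsupp.single 0 1) = pone m

/-- The monomial map `G_{τ,α,k}` on `S[t;σ]`:
`∑ a_i t^i ↦ ∑ τ(a_i) (α t^k)^i = ∑ τ(a_i) N_i^{σ^k}(α) t^{ik}`. -/
def skewMonomialMap [CommRing S] (σ τ : RingAut S) (α : S) (k : ℕ)
    (x : ℕ →₀ S) : ℕ →₀ S :=
  x.sum fun i c => Finsupp.single (i * k) (τ c * pnorm (σ ^ k) i α)

/-- The monomial map `G_{τ,α,k}` from `S[t;σ]` into the Petit algebra `S_g`: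
`∑ a_i t^i ↦ ∑ τ(a_i) (α t^k)^i`, powers computed by left nesting. -/
def skewToPetitMonomialMap [CommRing S] (σ τ : RingAut S) (m : ℕ)
    (g0 : Fin m → S) (α : S) (k : ℕ) (x : ℕ →₀ S) : Fin m → S :=
  x.sum fun i c => τ c • lpow σ m g0 (mono m α k) i

/-- The monomial map `G_{τ,α,k}` between Petit algebras of degree `m`:
`∑_{i<m} a_i t^i ↦ ∑_{i<m} τ(a_i) (α t^k)^i`, powers computed by left nesting
in the codomain `S_g`. -/
def petitMonomialMap [CommRing S] (σ τ : RingAut S) (m : ℕ)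
    (g0 : Fin m → S) (α : S) (k : ℕ) (x : Fin m → S) : Fin m → S :=
  ∑ i : Fin m, τ (x i) • lpow σ m g0 (mono m α k) (i : ℕ)

/-- The Hamming weight: the number of nonzero coefficients. -/
def hwt [CommRing S] {m : ℕ} (x : Fin m → S) : ℕ := by
  classical exact (Finset.univ.filter fun i => x i ≠ 0).card

namespace Aux
variable [CommRing S] (σ : RingAut S)

lemma skewMul_zero_left (y : ℕ →₀ S) : skewMul σ 0 y = 0 := by
  simp [skewMul]

lemma skewMul_zero_right (x : ℕ →₀ S) : skewMul σ x 0 = 0 := by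
  simp [skewMul]

lemma skewMul_add_left (x x' y : ℕ →₀ S) :
    skewMul σ (x + x') y = skewMul σ x y + skewMul σ x' y := by
  unfold skewMul
  rw [Finsupp.sum_add_index]
  · intro i _
    simp
  · intro i _ c c'
    rw [← Finsupp.sum_add]
    congr 1
    ext j d
    rw [add_mul, Finsupp.single_add]

lemma skewMul_add_right (x y y' : ℕ →₀ S) :
    skewMul σ x (y + y') = skewMul σ x y + skewMul σ x y' := by
  unfold skewMul
  rw [← Finsupp.sum_add]
  congr 1
  ext i c
  rw [Finsupp.sum_add_index]
  · intro j _
    simp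
  · intro j _ d d'
    rw [map_add, mul_add, Finsupp.single_add]

lemma skewMul_single_single (i j : ℕ) (c d : S) :
    skewMul σ (Finsupp.single i c) (Finsupp.single j d) =
      Finsupp.single (i + j) (c * (σ ^ i) d) := by
  unfold skewMul
  rw [Finsupp.sum_single_index (by simp), Finsupp.sum_single_index (by simp)]

lemma skewMul_single_apply (i : ℕ) (c : S) (y : ℕ →₀ S) (e : ℕ) :
    skewMul σ (Finsupp.single i c) y e =
      if i ≤ e then c * (σ ^ i) (y (e - i)) else 0 := by
  unfold skewMul
  rw [Finsupp.sum_single_index (by simp), Finsupp.sum_apply, Finsupp.sum]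
  by_cases h : i ≤ e
  · rw [if_pos h]
    have : ∀ j ∈ y.support, (Finsupp.single (i + j) (c * (σ ^ i) (y j))) e
        = if j = e - i then c * (σ ^ i) (y j) else 0 := by
      intro j _
      rw [Finsupp.single_apply]
      congr 1
      simp only [eq_iff_iff]
      omega
    rw [Finset.sum_congr rfl this, Finset.sum_ite_eq' y.support (e - i)]
    by_cases hm : e - i ∈ y.support
    · rw [if_pos hm]
    · rw [if_neg hm, Finsupp.notMem_support_iff.mp hm]
      simp
  · rw [if_neg h]
    apply Finset.sum_eq_zero
    intro j _
    rw [Finsupp.single_apply, if_neg (by omega)]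

lemma skewMul_apply (x y : ℕ →₀ S) (e : ℕ) :
    skewMul σ x y e = ∑ i ∈ Finset.range (e + 1), x i * (σ ^ i) (y (e - i)) := by
  induction x using Finsupp.induction with
  | zero => simp [skewMul_zero_left]
  | single_add i c x hi hc ih =>
    rw [skewMul_add_left, Finsupp.add_apply, ih, skewMul_single_apply]
    have : ∀ i' ∈ Finset.range (e + 1),
        (Finsupp.single i c + x) i' * (σ ^ i') (y (e - i'))
        = (if i' = i then c * (σ ^ i') (y (e - i')) else 0) + x i' * (σ ^ i') (y (e - i')) := by
      intro i' _
      rw [Finsupp.add_apply, Finsupp.single_apply, add_mul]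
      congr 1
      by_cases h : i = i'
      · simp [h]
      · simp [h, Ne.symm h]
    rw [Finset.sum_congr rfl this, Finset.sum_add_distrib, Finset.sum_ite_eq' (Finset.range (e+1)) i]
    simp only [Finset.mem_range]
    by_cases h : i ≤ e
    · rw [if_pos h, if_pos (show i < e + 1 by omega)]
    · rw [if_neg h, if_neg (show ¬ i < e + 1 by omega)]

lemma skewMul_assoc_sss (i j l : ℕ) (c d f : S) :
    skewMul σ (skewMul σ (Finsupp.single i c) (Finsupp.single j d)) (Finsupp.single l f)
      = skewMul σ (Finsupp.single i c) (skewMul σ (Finsupp.single j d) (Finsupp.single l f)) := by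
  rw [skewMul_single_single, skewMul_single_single, skewMul_single_single, skewMul_single_single]
  rw [add_assoc, pow_add, mul_assoc, map_mul]
  rfl

lemma skewMul_assoc_ss (i j : ℕ) (c d : S) (w : ℕ →₀ S) :
    skewMul σ (skewMul σ (Finsupp.single i c) (Finsupp.single j d)) w
      = skewMul σ (Finsupp.single i c) (skewMul σ (Finsupp.single j d) w) := by
  induction w using Finsupp.induction with
  | zero => simp [skewMul_zero_right]
  | single_add l f w hl hf ih =>
    rw [skewMul_add_right, skewMul_add_right, skewMul_add_right, ih, skewMul_assoc_sss]

lemma skewMul_assoc_s (i : ℕ) (c : S) (y w : ℕ →₀ S) :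
    skewMul σ (skewMul σ (Finsupp.single i c) y) w
      = skewMul σ (Finsupp.single i c) (skewMul σ y w) := by
  induction y using Finsupp.induction with
  | zero => simp [skewMul_zero_right, skewMul_zero_left]
  | single_add j d y hj hd ih =>
    rw [skewMul_add_right, skewMul_add_left, skewMul_add_left, skewMul_add_right, ih,
      skewMul_assoc_ss]

lemma skewMul_assoc (x y w : ℕ →₀ S) :
    skewMul σ (skewMul σ x y) w = skewMul σ x (skewMul σ y w) := by
  induction x using Finsupp.induction with
  | zero => simp [skewMul_zero_left]
  | single_add i c x hi hc ih =>
    rw [skewMul_add_left, skewMul_add_left, skewMul_add_left, ih, skewMul_assoc_s]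

lemma skewMul_one_right (x : ℕ →₀ S) : skewMul σ x (Finsupp.single 0 1) = x := by
  ext e
  rw [skewMul_apply]
  rw [Finset.sum_eq_single e]
  · rw [Nat.sub_self, Finsupp.single_apply, if_pos rfl, map_one, mul_one]
  · intro i hi hne
    rw [Finsupp.single_apply, if_neg (by simp at hi; omega), map_zero, mul_zero]
  · intro h
    simp at h

lemma skewMul_one_left (y : ℕ →₀ S) : skewMul σ (Finsupp.single 0 1) y = y := by
  ext e
  rw [skewMul_single_apply, if_pos (Nat.zero_le e)]
  simp only [pow_zero, one_mul, Nat.sub_zero]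
  rfl


lemma toPoly_apply {m : ℕ} (x : Fin m → S) (e : ℕ) :
    toPoly x e = if h : e < m then x ⟨e, h⟩ else 0 := by
  unfold toPoly
  rw [Finsupp.finset_sum_apply]
  by_cases h : e < m
  · rw [dif_pos h, Finset.sum_eq_single (⟨e, h⟩ : Fin m)]
    · rw [Finsupp.single_apply, if_pos rfl]
    · intro i _ hne
      rw [Finsupp.single_apply, if_neg (by simpa [Fin.ext_iff] using hne)]
    · intro hh
      exact absurd (Finset.mem_univ _) hh
  · rw [dif_neg h]
    apply Finset.sum_eq_zero
    intro i _
    rw [Finsupp.single_apply, if_neg (by omega)]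

lemma toPoly_apply_of_lt {m : ℕ} (x : Fin m → S) (e : ℕ) (h : e < m) :
    toPoly x e = x ⟨e, h⟩ := by rw [toPoly_apply, dif_pos h]

lemma toPoly_apply_of_ge {m : ℕ} (x : Fin m → S) (e : ℕ) (h : m ≤ e) :
    toPoly x e = 0 := by rw [toPoly_apply, dif_neg (by omega)]

lemma toPoly_mono {m : ℕ} (c : S) (k : ℕ) (hk : k < m) :
    toPoly (mono m c k) = Finsupp.single k c := by
  ext e
  rw [toPoly_apply, Finsupp.single_apply]
  by_cases h : e < m
  · rw [dif_pos h]
    unfold mono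
    by_cases hek : e = k
    · simp [hek]
    · rw [if_neg (show ¬ ((⟨e, h⟩ : Fin m) : ℕ) = k by simpa using hek), if_neg (Ne.symm hek)]
  · rw [dif_neg h, if_neg (by omega)]

lemma toPoly_pone {m : ℕ} (hm : 0 < m) : toPoly (pone m) = Finsupp.single 0 (1 : S) :=
  toPoly_mono 1 0 hm

lemma reduceAux_eq_self (m : ℕ) (f0 : Fin m → S) (K : ℕ) (x : ℕ →₀ S)
    (hx : ∀ e, m ≤ e → x e = 0) : reduceAux σ m f0 K x = x := by
  induction K with
  | zero => rfl
  | succ K ih =>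
    show reduceAux σ m f0 K _ = x
    rw [hx (m + K) (by omega)]
    rw [show (Finsupp.single (m + K) (0:S)) = 0 from Finsupp.single_zero _]
    rw [Finset.sum_eq_zero (fun j _ => by rw [zero_mul, Finsupp.single_zero])]
    rw [sub_zero, add_zero]
    exact ih

lemma sum_single_constF {m : ℕ} (hm : 0 < m) (a : S) (K : ℕ) (c : S) :
    ∑ j : Fin m, Finsupp.single (K + (j : ℕ)) (c * (σ ^ K) (constF m a j))
      = Finsupp.single K (c * (σ ^ K) a) := by
  rw [Finset.sum_eq_single (⟨0, hm⟩ : Fin m)]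
  · simp [constF]
  · intro j _ hne
    have : (j : ℕ) ≠ 0 := by simpa [Fin.ext_iff] using hne
    simp [constF, this]
  · intro hh
    exact absurd (Finset.mem_univ _) hh

lemma reduceAux_constF_apply (m : ℕ) (hm : 0 < m) (a : S) (r : ℕ) (hr : r < m) (K : ℕ) :
    ∀ x : ℕ →₀ S, K ≤ m →
    reduceAux σ m (constF m a) K x r = x r + if r < K then x (m + r) * (σ ^ r) a else 0 := by
  induction K with
  | zero => intro x _; simp [reduceAux]
  | succ K ih =>
    intro x hK
    show reduceAux σ m (constF m a) K _ r = _
    rw [sum_single_constF σ hm a K (x (m + K))]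
    rw [ih _ (by omega)]
    have h1 : (x - Finsupp.single (m + K) (x (m + K)) + Finsupp.single K (x (m + K) * (σ ^ K) a)) r
        = x r + if r = K then x (m + K) * (σ ^ K) a else 0 := by
      rw [Finsupp.add_apply, Finsupp.sub_apply, Finsupp.single_apply, Finsupp.single_apply]
      rw [if_neg (by omega)]
      rw [show (if K = r then x (m + K) * (σ ^ K) a else 0)
            = (if r = K then x (m + K) * (σ ^ K) a else 0) from by
          congr 1; simp only [eq_iff_iff]; omega]
      ring
    have h2 : r < K → (x - Finsupp.single (m + K) (x (m + K))
        + Finsupp.single K (x (m + K) * (σ ^ K) a)) (m + r) = x (m + r) := by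
      intro hrK
      rw [Finsupp.add_apply, Finsupp.sub_apply, Finsupp.single_apply, Finsupp.single_apply]
      rw [if_neg (by omega), if_neg (by omega)]
      ring
    rcases lt_trichotomy r K with h | h | h
    · rw [h2 h, h1, if_pos h, if_neg (show ¬ r = K by omega),
        if_pos (show r < K + 1 by omega)]
      ring
    · subst h
      rw [h1, if_pos rfl, if_neg (show ¬ r < r by omega), if_pos (show r < r + 1 by omega)]
      ring
    · rw [h1, if_neg (show ¬ r = K by omega), if_neg (show ¬ r < K by omega),
        if_neg (show ¬ r < K + 1 by omega)]
      ring

lemma petitMulC_apply {m : ℕ} (hm : 0 < m) (a : S) (x y : Fin m → S) (d : Fin m) :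
    petitMul σ m (constF m a) x y d =
      skewMul σ (toPoly x) (toPoly y) (d : ℕ)
        + skewMul σ (toPoly x) (toPoly y) (m + (d : ℕ)) * (σ ^ (d : ℕ)) a := by
  unfold petitMul
  rw [reduceAux_constF_apply σ m hm a d d.isLt m _ le_rfl, if_pos d.isLt]

lemma petitMul_apply_of_low {m : ℕ} (f0 : Fin m → S) (x y : Fin m → S)
    (h : ∀ e, m ≤ e → skewMul σ (toPoly x) (toPoly y) e = 0) (d : Fin m) :
    petitMul σ m f0 x y d = skewMul σ (toPoly x) (toPoly y) (d : ℕ) := by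
  unfold petitMul
  rw [reduceAux_eq_self σ m f0 m _ h]

lemma mono_mul_mono {m : ℕ} (f0 : Fin m → S) (c d : S) (i j : ℕ)
    (hi : i < m) (hj : j < m) (hij : i + j < m) :
    petitMul σ m f0 (mono m c i) (mono m d j) = mono m (c * (σ ^ i) d) (i + j) := by
  have hskew : skewMul σ (toPoly (mono m c i)) (toPoly (mono m d j))
      = Finsupp.single (i + j) (c * (σ ^ i) d) := by
    rw [toPoly_mono c i hi, toPoly_mono d j hj, skewMul_single_single]
  funext e
  rw [petitMul_apply_of_low σ f0 _ _ (fun e he => by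
    rw [hskew, Finsupp.single_apply, if_neg (by omega)]) e]
  rw [hskew, Finsupp.single_apply]
  unfold mono
  by_cases h : (e : ℕ) = i + j
  · rw [if_pos h, if_pos (by omega)]
  · rw [if_neg h, if_neg (by omega)]

lemma petitMul_const_right {m : ℕ} (f0 : Fin m → S) (hm : 0 < m) (x : Fin m → S) (c : S) :
    petitMul σ m f0 x (mono m c 0) = fun i => x i * (σ ^ (i : ℕ)) c := by
  have hskew : ∀ e, skewMul σ (toPoly x) (toPoly (mono m c 0)) e = toPoly x e * (σ ^ e) c := by
    intro e
    rw [toPoly_mono c 0 hm, skewMul_apply]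
    rw [Finset.sum_eq_single e]
    · rw [Nat.sub_self, Finsupp.single_apply, if_pos rfl]
    · intro i hi hne
      rw [Finsupp.single_apply, if_neg (by simp only [Finset.mem_range] at hi; omega),
        map_zero, mul_zero]
    · intro hh
      simp at hh
  funext d
  rw [petitMul_apply_of_low σ f0 _ _ (fun e he => by
    rw [hskew e, toPoly_apply_of_ge x e he, zero_mul]) d]
  rw [hskew, toPoly_apply_of_lt x _ d.isLt]

lemma petitMul_const_left {m : ℕ} (f0 : Fin m → S) (hm : 0 < m) (c : S) (y : Fin m → S) :
    petitMul σ m f0 (mono m c 0) y = fun i => c * y i := by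
  have hskew : ∀ e, skewMul σ (toPoly (mono m c 0)) (toPoly y) e = c * toPoly y e := by
    intro e
    rw [toPoly_mono c 0 hm, skewMul_single_apply, if_pos (Nat.zero_le e)]
    simp only [pow_zero, Nat.sub_zero]
    rfl
  funext d
  rw [petitMul_apply_of_low σ f0 _ _ (fun e he => by
    rw [hskew e, toPoly_apply_of_ge y e he, mul_zero]) d]
  rw [hskew, toPoly_apply_of_lt y _ d.isLt]

lemma petitMul_pone_right {m : ℕ} (f0 : Fin m → S) (hm : 0 < m) (x : Fin m → S) :
    petitMul σ m f0 x (pone m) = x := by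
  show petitMul σ m f0 x (mono m 1 0) = x
  rw [petitMul_const_right σ f0 hm x 1]
  funext i
  rw [map_one, mul_one]

def ZP (σ : RingAut S) (Z : ℕ →₀ S) : ℕ → ℕ →₀ S
  | 0 => Finsupp.single 0 1
  | j + 1 => skewMul σ Z (ZP σ Z j)

def pS (σ : RingAut S) (c : S) : ℕ → S
  | 0 => 1
  | j + 1 => c * σ (pS σ c j)

lemma ZP_deg {Z : ℕ →₀ S} {k : ℕ} (hZ : ∀ e, k < e → Z e = 0) :
    ∀ j e, j * k < e → ZP σ Z j e = 0 := by
  intro j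
  induction j with
  | zero =>
    intro e he
    show (Finsupp.single 0 (1:S)) e = 0
    rw [Finsupp.single_apply, if_neg (by omega)]
  | succ j ih =>
    intro e he
    show skewMul σ Z (ZP σ Z j) e = 0
    rw [skewMul_apply]
    apply Finset.sum_eq_zero
    intro i hi
    by_cases h : i ≤ k
    · rw [ih (e - i) (by
        simp only [Finset.mem_range] at hi
        have : (j + 1) * k = j * k + k := by ring
        omega), map_zero, mul_zero]
    · rw [hZ i (by omega), zero_mul]

lemma ZP_comm (Z : ℕ →₀ S) : ∀ j, skewMul σ Z (ZP σ Z j) = skewMul σ (ZP σ Z j) Z := by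
  intro j
  induction j with
  | zero => show skewMul σ Z (Finsupp.single 0 1) = skewMul σ (Finsupp.single 0 1) Z
            rw [skewMul_one_right, skewMul_one_left]
  | succ j ih =>
    show skewMul σ Z (skewMul σ Z (ZP σ Z j)) = skewMul σ (skewMul σ Z (ZP σ Z j)) Z
    rw [skewMul_assoc]
    nth_rewrite 1 [ih]
    rfl

lemma ZP_top {Z : ℕ →₀ S} {k : ℕ} (hσk : ∀ x : S, (σ ^ k) x = σ x)
    (hZ : ∀ e, k < e → Z e = 0) :
    ∀ j, ZP σ Z j (j * k) = pS σ (Z k) j := by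
  intro j
  induction j with
  | zero =>
    rw [Nat.zero_mul]
    show (Finsupp.single 0 (1:S)) 0 = 1
    simp
  | succ j ih =>
    show skewMul σ Z (ZP σ Z j) ((j+1) * k) = Z k * σ (pS σ (Z k) j)
    have hsub : (j+1) * k - k = j * k := by
      have h9 : (j+1) * k = j * k + k := by ring
      omega
    rw [skewMul_apply, Finset.sum_eq_single k]
    · rw [hsub, ih, hσk]
    · intro i hi hne
      by_cases h : i ≤ k
      · rw [ZP_deg σ hZ j ((j+1)*k - i) (by
          simp only [Finset.mem_range] at hi
          have : (j+1) * k = j * k + k := by ring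
          omega), map_zero, mul_zero]
      · rw [hZ i (by omega), zero_mul]
    · intro hh
      simp only [Finset.mem_range, not_lt] at hh
      have : (j+1) * k = j * k + k := by ring
      omega

lemma pS_ne_zero [IsDomain S] {c : S} (hc : c ≠ 0) : ∀ j, pS σ c j ≠ 0 := by
  intro j
  induction j with
  | zero => exact one_ne_zero
  | succ j ih =>
    show c * σ (pS σ c j) ≠ 0
    apply mul_ne_zero hc
    intro h
    exact ih (σ.injective (h.trans (map_zero σ).symm))

lemma pS_comm (c : S) : ∀ j, pS σ c j * (σ ^ j) c = c * σ (pS σ c j) := by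
  intro j
  induction j with
  | zero =>
    show 1 * (σ ^ 0) c = c * σ 1
    rw [pow_zero, map_one, mul_one, one_mul]
    rfl
  | succ j ih =>
    show (c * σ (pS σ c j)) * (σ ^ (j+1)) c = c * σ (pS σ c (j+1))
    have h1 : (σ ^ (j+1)) c = σ ((σ ^ j) c) := by rw [pow_succ']; rfl
    rw [h1, mul_assoc, ← map_mul, ih]
    rfl

lemma ZP_residue {Z : ℕ →₀ S} {n : ℕ} (hZres : ∀ i, Z i ≠ 0 → i ≡ 1 [MOD n]) :
    ∀ j e, ZP σ Z j e ≠ 0 → e ≡ j [MOD n] := by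
  intro j
  induction j with
  | zero =>
    intro e he
    show e ≡ 0 [MOD n]
    have : e = 0 := by
      by_contra h
      exact he (by show (Finsupp.single 0 (1:S)) e = 0
                   rw [Finsupp.single_apply, if_neg (by omega)])
    rw [this]
  | succ j ih =>
    intro e he
    rw [show ZP σ Z (j+1) e = skewMul σ Z (ZP σ Z j) e from rfl, skewMul_apply] at he
    obtain ⟨i, hi, hne⟩ := Finset.exists_ne_zero_of_sum_ne_zero he
    simp only [Finset.mem_range] at hi
    have hZi : Z i ≠ 0 := fun h => hne (by rw [h, zero_mul])
    have hPe : ZP σ Z j (e - i) ≠ 0 := by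
      intro h
      exact hne (by rw [h, map_zero, mul_zero])
    have h1 := hZres i hZi
    have h2 := ih (e - i) hPe
    have : e = i + (e - i) := by omega
    rw [this]
    have := Nat.ModEq.add h1 h2
    rwa [Nat.add_comm 1 j] at this

end Aux

end PetitFormal

open PetitFormal
open PetitFormal.Aux

/-- Theorem `thm:main`: over an integral domain, if `G : S_f → S_b` is a
non-monomial homomorphism with `G|_S = τ` commuting with `σ`, `k = deg G(t)`,
`s > 1` least with `sk ≥ m`, and `(s+1)k ≤ 2m`, then `b ∈ S_0` and `n ∣ m`,
i.e. `S_b` is associative. -/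
theorem stmt17 {S : Type*} [CommRing S] [IsDomain S] (σ τ : RingAut S)
    (n : ℕ) (hn : orderOf σ = n) (hn2 : 2 ≤ n) (m : ℕ) (hm : 0 < m)
    (hcomm : ∀ x, τ (σ x) = σ (τ x)) (f0 : Fin m → S) (b : Sˣ)
    (G : (Fin m → S) → (Fin m → S))
    (hhom : IsPetitHom σ m f0 (constF m (b : S)) G)
    (hres : ∀ c : S, G (mono m c 0) = mono m (τ c) 0)
    (hnonmono : 2 ≤ hwt (G (mono m 1 1)))
    (k : ℕ)
    (hdegk : ∃ d : Fin m, (d : ℕ) = k ∧ G (mono m 1 1) d ≠ 0)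
    (hdegk' : ∀ d : Fin m, k < (d : ℕ) → G (mono m 1 1) d = 0)
    (s : ℕ) (hs1 : 1 < s) (hsk : m ≤ s * k)
    (hleast : ∀ s' : ℕ, 1 < s' → m ≤ s' * k → s ≤ s')
    (hstar : (s + 1) * k ≤ 2 * m) :
    σ (b : S) = (b : S) ∧ n ∣ m := by
  classical
  obtain ⟨hGadd, hGmul, hGone⟩ := hhom
  obtain ⟨dk, hdk, hdknz⟩ := hdegk
  have hkm : k < m := hdk ▸ dk.isLt
  set z : Fin m → S := G (mono m 1 1) with hz
  have hzk : z ⟨k, hkm⟩ ≠ 0 := by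
    have : dk = (⟨k, hkm⟩ : Fin m) := by
      apply Fin.ext
      exact hdk
    rwa [this] at hdknz
  have hZlt : ∀ (e : ℕ) (h : e < m), toPoly z e = z ⟨e, h⟩ :=
    fun e h => toPoly_apply_of_lt z e h
  have hZge : ∀ e, m ≤ e → toPoly z e = 0 := fun e h => toPoly_apply_of_ge z e h
  have hZk : toPoly z k ≠ 0 := by rw [hZlt k hkm]; exact hzk
  have hZhigh : ∀ e, k < e → toPoly z e = 0 := by
    intro e he
    by_cases h : e < m
    · rw [hZlt e h]; exact hdegk' ⟨e, h⟩ he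
    · exact hZge e (by omega)
  have hk0 : 1 ≤ k := by
    by_contra hk
    have hksub : ∀ i : Fin m, z i ≠ 0 → i = (⟨0, hm⟩ : Fin m) := by
      intro i hi
      apply Fin.ext
      show (i : ℕ) = 0
      by_contra hh
      exact hi (hdegk' i (by omega))
    have hcard : hwt z ≤ 1 := by
      unfold hwt
      apply Finset.card_le_one.mpr
      intro a ha b2 hb2
      simp only [Finset.mem_filter] at ha hb2
      rw [hksub a ha.2, hksub b2 hb2.2]
    omega
  have hm2 : 2 ≤ m := by omega
  -- G of monomials
  have hGmono : ∀ j, j < m → G (mono m 1 j) = lpow σ m (constF m (b : S)) z j := by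
    intro j
    induction j with
    | zero => intro _; exact hGone
    | succ j ih =>
      intro hj
      have hmono : petitMul σ m f0 (mono m 1 1) (mono m 1 j) = mono m 1 (j + 1) := by
        rw [mono_mul_mono σ f0 1 1 1 j (by omega) (by omega) (by omega), map_one, mul_one,
          Nat.add_comm]
      rw [← hmono, hGmul, ih (by omega), ← hz]
      rfl
  have hlpow1 : lpow σ m (constF m (b : S)) z 1 = z := by
    show petitMul σ m (constF m (b : S)) z (pone m) = z
    exact petitMul_pone_right σ _ hm z
  have hτσ : ∀ (j : ℕ) (c : S), τ ((σ ^ j) c) = (σ ^ j) (τ c) := by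
    intro j
    induction j with
    | zero => intro c; rfl
    | succ j ih =>
      intro c
      have e1 : (σ ^ (j+1)) c = (σ ^ j) (σ c) := by rw [pow_succ]; rfl
      have e2 : (σ ^ (j+1)) (τ c) = (σ ^ j) (σ (τ c)) := by rw [pow_succ]; rfl
      rw [e1, e2, ih (σ c), hcomm]
  have hsupp : ∀ (j : ℕ), j < m → ∀ i : Fin m,
      lpow σ m (constF m (b : S)) z j i ≠ 0 → (σ ^ (i : ℕ) : RingAut S) = σ ^ j := by
    intro j hjm i hne
    have key : ∀ a : S, lpow σ m (constF m (b : S)) z j i * (σ ^ (i : ℕ)) a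
        = (σ ^ j) a * lpow σ m (constF m (b : S)) z j i := by
      intro a
      set c : S := τ.symm a with hc
      have hτc : τ c = a := τ.apply_symm_apply a
      have e1 : petitMul σ m f0 (mono m 1 j) (mono m c 0) = mono m ((σ ^ j) c) j := by
        rw [mono_mul_mono σ f0 1 c j 0 hjm hm (by omega), one_mul, Nat.add_zero]
      have e2 : petitMul σ m f0 (mono m ((σ ^ j) c) 0) (mono m 1 j)
          = mono m ((σ ^ j) c) j := by
        rw [mono_mul_mono σ f0 _ 1 0 j hm hjm (by omega), map_one, mul_one, Nat.zero_add]
      have h3 := hGmul (mono m 1 j) (mono m c 0)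
      rw [e1, ← e2, hGmul, hres c, hres ((σ ^ j) c), hGmono j hjm] at h3
      rw [petitMul_const_right σ (constF m (b : S)) hm _ (τ c),
        petitMul_const_left σ (constF m (b : S)) hm _ _] at h3
      have h4 : lpow σ m (constF m (b : S)) z j i * (σ ^ (i : ℕ)) (τ c)
          = τ ((σ ^ j) c) * lpow σ m (constF m (b : S)) z j i := (congrFun h3 i).symm
      rw [hτσ j c, hτc] at h4
      exact h4
    apply RingEquiv.ext
    intro a
    have h6 : lpow σ m (constF m (b : S)) z j i * ((σ ^ (i : ℕ)) a - (σ ^ j) a) = 0 := by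
      rw [mul_sub, key a]
      ring
    rcases mul_eq_zero.mp h6 with h | h
    · exact absurd h hne
    · have := sub_eq_zero.mp h
      exact this
  have hk1 : k ≡ 1 [MOD n] := by
    have h1 := hsupp 1 (by omega) ⟨k, hkm⟩ (by rw [hlpow1]; exact hzk)
    rw [← hn]
    exact pow_eq_pow_iff_modEq.mp h1
  have hσk : ∀ x : S, (σ ^ k) x = σ x := by
    intro x
    have h1 := hsupp 1 (by omega) ⟨k, hkm⟩ (by rw [hlpow1]; exact hzk)
    rw [show ((⟨k, hkm⟩ : Fin m) : ℕ) = k from rfl] at h1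
    rw [h1, pow_one]
  have hZres : ∀ i, toPoly z i ≠ 0 → i ≡ 1 [MOD n] := by
    intro i hi
    by_cases h : i < m
    · have h1 := hsupp 1 (by omega) ⟨i, h⟩ (by rw [hlpow1]; rw [hZlt i h] at hi; exact hi)
      rw [← hn]
      exact pow_eq_pow_iff_modEq.mp h1
    · exact absurd (hZge i (by omega)) hi
  have hZ0 : toPoly z 0 = 0 := by
    by_contra h
    have h1 := hZres 0 h
    have h2 : (0 : ℕ) % n = 1 % n := h1
    rw [Nat.zero_mod, Nat.mod_eq_of_lt (by omega)] at h2
    omega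
  have hk2 : 2 ≤ k := by
    by_contra hk
    have hkeq : k = 1 := by omega
    have hksub : ∀ i : Fin m, z i ≠ 0 → i = (⟨1, by omega⟩ : Fin m) := by
      intro i hi
      apply Fin.ext
      show (i : ℕ) = 1
      rcases Nat.lt_trichotomy (i : ℕ) 1 with h | h | h
      · exfalso
        have : (i : ℕ) = 0 := by omega
        have h9 : toPoly z (i : ℕ) ≠ 0 := by rw [hZlt _ i.isLt]; simpa using hi
        rw [this] at h9
        exact h9 hZ0
      · exact h
      · exact absurd (hdegk' i (by omega)) hi
    have hcard : hwt z ≤ 1 := by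
      unfold hwt
      apply Finset.card_le_one.mpr
      intro a ha b2 hb2
      simp only [Finset.mem_filter] at ha hb2
      rw [hksub a ha.2, hksub b2 hb2.2]
    omega
  have hk3 : 3 ≤ k := by
    have hdvd1 : n ∣ k - 1 := (Nat.modEq_iff_dvd' (by omega)).mp hk1.symm
    have := Nat.le_of_dvd (by omega) hdvd1
    omega
  -- arithmetic
  have hprod1 : (s - 1) * k + k = s * k := by
    have e : s - 1 + 1 = s := by omega
    calc (s - 1) * k + k = ((s - 1) + 1) * k := by ring
    _ = s * k := by rw [e]
  have hs1k : (s - 1) * k < m := by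
    by_cases hs2 : s = 2
    · subst hs2
      simpa using hkm
    · by_contra h
      have := hleast (s - 1) (by omega) (by omega)
      omega
  have hsk2m : s * k < 2 * m := by omega
  have hsm : s + 1 < m := by
    by_contra h
    have h1 : m - 2 ≤ s - 1 := by omega
    have h2 : (m - 2) * k ≤ (s - 1) * k := Nat.mul_le_mul_right k h1
    have h3 : (m - 2) * 3 ≤ (m - 2) * k := Nat.mul_le_mul_left (m - 2) hk3
    omega
  -- ZP facts
  have hp : ZP σ (toPoly z) s (s * k) = pS σ (toPoly z k) s := ZP_top σ hσk hZhigh s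
  have hpne : pS σ (toPoly z k) s ≠ 0 := pS_ne_zero σ hZk s
  have hbne : (b : S) ≠ 0 := b.ne_zero
  have htoPoly_lpow : ∀ j, j * k < m →
      toPoly (lpow σ m (constF m (b : S)) z j) = ZP σ (toPoly z) j := by
    intro j
    induction j with
    | zero => intro _; exact toPoly_pone hm
    | succ j ih =>
      intro hj
      have hjk : (j + 1) * k = j * k + k := by ring
      have hjm : j * k < m := by omega
      have hdegS : ∀ e, m ≤ e → ZP σ (toPoly z) (j + 1) e = 0 :=
        fun e he => ZP_deg σ hZhigh (j + 1) e (by omega)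
      show toPoly (petitMul σ m (constF m (b : S)) z (lpow σ m (constF m (b : S)) z j))
          = ZP σ (toPoly z) (j + 1)
      have hskeq : skewMul σ (toPoly z) (toPoly (lpow σ m (constF m (b : S)) z j))
          = ZP σ (toPoly z) (j + 1) := by
        rw [ih hjm]
        rfl
      ext e
      rw [toPoly_apply]
      by_cases h : e < m
      · rw [dif_pos h]
        rw [petitMul_apply_of_low σ _ _ _ (fun e' he' => by
          rw [hskeq]; exact hdegS e' he') ⟨e, h⟩]
        rw [hskeq]
      · rw [dif_neg h, hdegS e (by omega)]
  have hy : ∀ d : Fin m, lpow σ m (constF m (b : S)) z s d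
      = ZP σ (toPoly z) s (d : ℕ)
        + ZP σ (toPoly z) s (m + (d : ℕ)) * (σ ^ (d : ℕ)) (b : S) := by
    intro d
    have hs' : s - 1 + 1 = s := by omega
    rw [← hs']
    show petitMul σ m (constF m (b : S)) z (lpow σ m (constF m (b : S)) z (s - 1)) d = _
    rw [petitMulC_apply σ hm (b : S) z _ d]
    rw [htoPoly_lpow (s - 1) (by omega)]
    rfl
  have hYlt : ∀ (e : ℕ) (h : e < m), toPoly (lpow σ m (constF m (b : S)) z s) e
      = ZP σ (toPoly z) s e + ZP σ (toPoly z) s (m + e) * (σ ^ e) (b : S) :=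
    fun e h => (toPoly_apply_of_lt _ e h).trans (hy ⟨e, h⟩)
  have hYge : ∀ e, m ≤ e → toPoly (lpow σ m (constF m (b : S)) z s) e = 0 :=
    fun e h => toPoly_apply_of_ge _ e h
  have hi0m : s * k - m < m := by omega
  -- n divides m
  have hires : s * k - m ≡ s [MOD n] := by
    by_cases hyi : lpow σ m (constF m (b : S)) z s ⟨s * k - m, hi0m⟩ ≠ 0
    · have h1 := hsupp s (by omega) _ hyi
      rw [show ((⟨s * k - m, hi0m⟩ : Fin m) : ℕ) = s * k - m from rfl] at h1
      rw [← hn]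
      exact pow_eq_pow_iff_modEq.mp h1
    · push_neg at hyi
      have h10 := hy ⟨s * k - m, hi0m⟩
      rw [hyi] at h10
      rw [show ((⟨s * k - m, hi0m⟩ : Fin m) : ℕ) = s * k - m from rfl] at h10
      rw [show m + (s * k - m) = s * k by omega, hp] at h10
      have h11 : ZP σ (toPoly z) s (s * k - m) ≠ 0 := by
        intro h
        rw [h, zero_add] at h10
        rcases mul_eq_zero.mp h10.symm with h' | h'
        · exact hpne h'
        · have : (b : S) = 0 := by
            have := (σ ^ (s * k - m)).injective (h'.trans (map_zero _).symm)
            simpa using this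
          exact hbne this
      exact ZP_residue σ hZres s _ h11
  have hdvd : n ∣ m := by
    have h13 : s * k ≡ s [MOD n] := by
      have := Nat.ModEq.mul_left s hk1
      simpa using this
    have h14 : (s * k - m) + m ≡ s + 0 [MOD n] := by
      rw [show (s * k - m) + m = s * k by omega, Nat.add_zero]
      exact h13
    have h15 : m ≡ 0 [MOD n] := Nat.ModEq.add_left_cancel hires h14
    exact (Nat.modEq_zero_iff_dvd).mp h15
  refine ⟨?_, hdvd⟩
  -- now prove σ b = b
  have hσs : ∀ x : S, (σ ^ (s * k - m)) x = (σ ^ s) x := by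
    intro x
    have h1 : (σ ^ (s * k - m) : RingAut S) = σ ^ s := by
      apply pow_eq_pow_iff_modEq.mpr
      rw [hn]
      exact hires
    rw [h1]
  have hprod2 : (s + 1) * k = s * k + k := by ring
  have hmr0 : m + ((s + 1) * k - m) = (s + 1) * k := by omega
  have hr0k : k ≤ (s + 1) * k - m := by omega
  have hr0m : (s + 1) * k - m ≤ m := by omega
  have hAB : petitMul σ m (constF m (b : S)) z (lpow σ m (constF m (b : S)) z s)
      = petitMul σ m (constF m (b : S)) (lpow σ m (constF m (b : S)) z s) z := by
    have hmono_s : petitMul σ m f0 (mono m 1 1) (mono m 1 s) = mono m 1 (s + 1) := by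
      rw [mono_mul_mono σ f0 1 1 1 s (by omega) (by omega) (by omega), map_one, mul_one,
        Nat.add_comm]
    have hmono_s' : petitMul σ m f0 (mono m 1 s) (mono m 1 1) = mono m 1 (s + 1) := by
      rw [mono_mul_mono σ f0 1 1 s 1 (by omega) (by omega) (by omega), map_one, mul_one]
    have h1 := hGmul (mono m 1 1) (mono m 1 s)
    have h2 := hGmul (mono m 1 s) (mono m 1 1)
    rw [hmono_s] at h1
    rw [hmono_s'] at h2
    rw [hGmono s (by omega), ← hz] at h1 h2
    exact h1.symm.trans h2
  have hQQ' : skewMul σ (toPoly z) (toPoly (lpow σ m (constF m (b : S)) z s)) ((s + 1) * k - m)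
      = skewMul σ (toPoly (lpow σ m (constF m (b : S)) z s)) (toPoly z) ((s + 1) * k - m) := by
    have hZY0 : skewMul σ (toPoly z) (toPoly (lpow σ m (constF m (b : S)) z s))
        (m + ((s + 1) * k - m)) = 0 := by
      rw [skewMul_apply]
      apply Finset.sum_eq_zero
      intro i hi
      by_cases h : i ≤ k
      · rw [hYge (m + ((s + 1) * k - m) - i) (by omega), map_zero, mul_zero]
      · rw [hZhigh i (by omega), zero_mul]
    have hYZ0 : skewMul σ (toPoly (lpow σ m (constF m (b : S)) z s)) (toPoly z)
        (m + ((s + 1) * k - m)) = 0 := by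
      rw [skewMul_apply]
      apply Finset.sum_eq_zero
      intro j hj
      by_cases h : j < m
      · rw [hZhigh (m + ((s + 1) * k - m) - j) (by omega), map_zero, mul_zero]
      · rw [hYge j (by omega), zero_mul]
    by_cases hcase : (s + 1) * k - m < m
    · have h3 : petitMul σ m (constF m (b : S)) z (lpow σ m (constF m (b : S)) z s)
          ⟨(s + 1) * k - m, hcase⟩
          = petitMul σ m (constF m (b : S)) (lpow σ m (constF m (b : S)) z s) z
          ⟨(s + 1) * k - m, hcase⟩ := by rw [hAB]
      rw [petitMulC_apply σ hm, petitMulC_apply σ hm] at h3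
      rw [show ((⟨(s + 1) * k - m, hcase⟩ : Fin m) : ℕ) = (s + 1) * k - m from rfl] at h3
      rw [hZY0, hYZ0, zero_mul, add_zero, add_zero] at h3
      exact h3
    · have hr0eq : (s + 1) * k - m = m := by omega
      have h3 : petitMul σ m (constF m (b : S)) z (lpow σ m (constF m (b : S)) z s) ⟨0, hm⟩
          = petitMul σ m (constF m (b : S)) (lpow σ m (constF m (b : S)) z s) z
          ⟨0, hm⟩ := by rw [hAB]
      rw [petitMulC_apply σ hm, petitMulC_apply σ hm] at h3
      rw [show ((⟨0, hm⟩ : Fin m) : ℕ) = 0 from rfl, Nat.add_zero] at h3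
      have hQ0 : skewMul σ (toPoly z) (toPoly (lpow σ m (constF m (b : S)) z s)) 0 = 0 := by
        rw [skewMul_apply]
        rw [Finset.sum_range_one, hZ0, zero_mul]
      have hQ'0 : skewMul σ (toPoly (lpow σ m (constF m (b : S)) z s)) (toPoly z) 0 = 0 := by
        rw [skewMul_apply]
        rw [Finset.sum_range_one, Nat.sub_zero, hZ0, map_zero (σ ^ 0 : RingAut S), mul_zero]
      rw [hQ0, hQ'0, zero_add, zero_add] at h3
      have h4 : skewMul σ (toPoly z) (toPoly (lpow σ m (constF m (b : S)) z s)) m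
          = skewMul σ (toPoly (lpow σ m (constF m (b : S)) z s)) (toPoly z) m :=
        mul_right_cancel₀ (by
          intro h
          rw [pow_zero] at h
          exact hbne h) h3
      rw [hr0eq]
      exact h4
  have hQ : skewMul σ (toPoly z) (toPoly (lpow σ m (constF m (b : S)) z s)) ((s + 1) * k - m)
      = skewMul σ (toPoly z) (ZP σ (toPoly z) s) ((s + 1) * k - m)
        + toPoly z k * σ (pS σ (toPoly z k) s * (σ ^ s) (b : S)) := by
    rw [skewMul_apply, skewMul_apply]
    have hterm : ∀ i ∈ Finset.range ((s + 1) * k - m + 1),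
        toPoly z i * (σ ^ i) (toPoly (lpow σ m (constF m (b : S)) z s) ((s + 1) * k - m - i))
        = toPoly z i * (σ ^ i) (ZP σ (toPoly z) s ((s + 1) * k - m - i))
          + (if i = k then toPoly z k * σ (pS σ (toPoly z k) s * (σ ^ s) (b : S)) else 0) := by
      intro i hi
      simp only [Finset.mem_range] at hi
      by_cases hi0 : i = 0
      · subst hi0
        rw [hZ0, zero_mul, zero_mul, if_neg (by omega), add_zero]
      by_cases hik : i = k
      · subst hik
        rw [if_pos rfl]
        rw [hYlt ((s + 1) * i - m - i) (by omega)]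
        rw [show m + ((s + 1) * i - m - i) = s * i by omega]
        rw [show (σ ^ ((s + 1) * i - m - i)) (b : S) = (σ ^ (s * i - m)) (b : S) from by
          rw [show (s + 1) * i - m - i = s * i - m by omega]]
        rw [hσs (b : S), hp, map_add, mul_add]
        congr 1
        rw [hσk]
      · rw [if_neg hik, add_zero]
        by_cases h : i < k
        · rw [hYlt ((s + 1) * k - m - i) (by omega)]
          rw [ZP_deg σ hZhigh s (m + ((s + 1) * k - m - i)) (by omega), zero_mul, add_zero]
        · rw [hZhigh i (by omega), zero_mul, zero_mul]
    rw [Finset.sum_congr rfl hterm, Finset.sum_add_distrib,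
      Finset.sum_ite_eq' (Finset.range ((s + 1) * k - m + 1)) k,
      if_pos (by simp only [Finset.mem_range]; omega)]
  have hQ' : skewMul σ (toPoly (lpow σ m (constF m (b : S)) z s)) (toPoly z) ((s + 1) * k - m)
      = skewMul σ (ZP σ (toPoly z) s) (toPoly z) ((s + 1) * k - m)
        + pS σ (toPoly z k) s * (σ ^ s) (b : S) * (σ ^ s) (toPoly z k) := by
    rw [skewMul_apply, skewMul_apply]
    have hterm : ∀ j ∈ Finset.range ((s + 1) * k - m + 1),
        toPoly (lpow σ m (constF m (b : S)) z s) j * (σ ^ j) (toPoly z ((s + 1) * k - m - j))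
        = ZP σ (toPoly z) s j * (σ ^ j) (toPoly z ((s + 1) * k - m - j))
          + (if j = s * k - m then
              pS σ (toPoly z k) s * (σ ^ s) (b : S) * (σ ^ s) (toPoly z k) else 0) := by
      intro j hj
      simp only [Finset.mem_range] at hj
      by_cases hjm' : m ≤ j
      · rw [hYge j hjm']
        rw [show (s + 1) * k - m - j = 0 by omega, hZ0, map_zero, mul_zero, mul_zero,
          if_neg (by omega), add_zero]
      push_neg at hjm'
      by_cases hji : j = s * k - m
      · subst hji
        rw [if_pos rfl]
        rw [hYlt (s * k - m) hjm']
        rw [show m + (s * k - m) = s * k by omega, hp]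
        rw [add_mul]
        congr 1
        rw [show (s + 1) * k - m - (s * k - m) = k by omega]
        rw [hσs (b : S), hσs (toPoly z k)]
      · rw [if_neg hji, add_zero]
        by_cases h : j < s * k - m
        · rw [hZhigh ((s + 1) * k - m - j) (by omega), map_zero, mul_zero, mul_zero]
        · rw [hYlt j hjm']
          rw [ZP_deg σ hZhigh s (m + j) (by omega), zero_mul, add_zero]
    rw [Finset.sum_congr rfl hterm, Finset.sum_add_distrib,
      Finset.sum_ite_eq' (Finset.range ((s + 1) * k - m + 1)) (s * k - m),
      if_pos (by simp only [Finset.mem_range]; omega)]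
  have hcomm2 : skewMul σ (toPoly z) (ZP σ (toPoly z) s) ((s + 1) * k - m)
      = skewMul σ (ZP σ (toPoly z) s) (toPoly z) ((s + 1) * k - m) := by
    rw [ZP_comm σ (toPoly z) s]
  have hkey : toPoly z k * σ (pS σ (toPoly z k) s * (σ ^ s) (b : S))
      = pS σ (toPoly z k) s * (σ ^ s) (b : S) * (σ ^ s) (toPoly z k) := by
    have h := hQQ'
    rw [hQ, hQ', hcomm2] at h
    exact add_left_cancel h
  have hps_comm := pS_comm σ (toPoly z k) s
  have hzσp : toPoly z k * σ (pS σ (toPoly z k) s) ≠ 0 := by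
    apply mul_ne_zero hZk
    intro h
    exact hpne (σ.injective (h.trans (map_zero σ).symm))
  have hfinal : σ ((σ ^ s) (b : S)) = (σ ^ s) (b : S) := by
    apply mul_left_cancel₀ hzσp
    rw [map_mul] at hkey
    calc toPoly z k * σ (pS σ (toPoly z k) s) * σ ((σ ^ s) (b : S))
        = toPoly z k * (σ (pS σ (toPoly z k) s) * σ ((σ ^ s) (b : S))) := by ring
      _ = pS σ (toPoly z k) s * (σ ^ s) (b : S) * (σ ^ s) (toPoly z k) := hkey
      _ = pS σ (toPoly z k) s * (σ ^ s) (toPoly z k) * (σ ^ s) (b : S) := by ring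
      _ = toPoly z k * σ (pS σ (toPoly z k) s) * (σ ^ s) (b : S) := by rw [hps_comm]
  have e1 : (σ ^ (s + 1)) (b : S) = σ ((σ ^ s) (b : S)) := by rw [pow_succ']; rfl
  have e2 : (σ ^ (s + 1)) (b : S) = (σ ^ s) (σ (b : S)) := by rw [pow_succ]; rfl
  have h20 : (σ ^ s) (σ (b : S)) = (σ ^ s) (b : S) := by
    rw [← e2, e1, hfinal]
  exact (σ ^ s).injective h20
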